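/- Let n ≥ 2 and N ≥ 2 be integers, let G be a connected simple undirected graph on {1,…,N} with symmetric edge weights k_ij = k_ji > 0, set K = min over edges {i,j} of k_ij, and let x_1,…,x_N be unit vectors in ℝ^{n+1} forming a dispersed configuration. Then the largest eigenvalue β(x) of the real symmetric matrix B(x) satisfies β(x) ≥ (K/(n+1))·(n − 1 − cos(π/N))·(1 − cos(π/N)); in particular β(x) > 0. -/

import Mathlib

open Matrix BigOperators Real

noncomputable section

/-- The orthogonal projection `I - x xᵀ` onto the hyperplane orthogonal to `x`. -/
def proj {n : ℕ} (x : Fin (n + 1) → ℝ) : Matrix (Fin (n + 1)) (Fin (n + 1)) ℝ :=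
  1 - Matrix.vecMulVec x x

/-- The linearization `B(x)` of the homogeneous Lohe model, as an
`N(n+1) × N(n+1)` block matrix indexed by `Fin N × Fin (n+1)`. -/
def Bmat {n N : ℕ} (G : SimpleGraph (Fin N)) [DecidableRel G.Adj]
    (k : Fin N → Fin N → ℝ) (x : Fin N → Fin (n + 1) → ℝ) :
    Matrix (Fin N × Fin (n + 1)) (Fin N × Fin (n + 1)) ℝ :=
  Matrix.of fun p q =>
    if p.1 = q.1 then
      ((-(∑ l ∈ G.neighborFinset p.1, k p.1 l * (x l ⬝ᵥ x p.1))) • proj (x p.1)) p.2 q.2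
    else if G.Adj p.1 q.1 then
      (k p.1 q.1 • (proj (x p.1) * proj (x q.1))) p.2 q.2
    else 0

set_option linter.unusedSectionVars false
set_option maxHeartbeats 1000000

namespace LoheAux


lemma arccos_anti {x y : ℝ} (h : x ≤ y) : Real.arccos y ≤ Real.arccos x := by
  rw [Real.arccos_eq_pi_div_two_sub_arcsin, Real.arccos_eq_pi_div_two_sub_arcsin]
  have := Real.monotone_arcsin h
  linarith

lemma dot_sq_le {d : ℕ} (a b : Fin d → ℝ) : (a ⬝ᵥ b)^2 ≤ (a ⬝ᵥ a) * (b ⬝ᵥ b) := by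
  simpa [dotProduct, sq] using Finset.sum_mul_sq_le_sq_mul_sq Finset.univ a b

lemma abs_dot_le_one {d : ℕ} {a b : Fin d → ℝ} (ha : a ⬝ᵥ a = 1) (hb : b ⬝ᵥ b = 1) :
    |a ⬝ᵥ b| ≤ 1 := by
  have h := dot_sq_le a b
  rw [ha, hb] at h
  nlinarith [abs_nonneg (a ⬝ᵥ b), sq_abs (a ⬝ᵥ b)]

lemma arccos_triangle {d : ℕ} {a b c : Fin d → ℝ}
    (ha : a ⬝ᵥ a = 1) (hb : b ⬝ᵥ b = 1) (hc : c ⬝ᵥ c = 1) :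
    Real.arccos (a ⬝ᵥ c) ≤ Real.arccos (a ⬝ᵥ b) + Real.arccos (b ⬝ᵥ c) := by
  set p := a ⬝ᵥ b with hp
  set q := b ⬝ᵥ c with hq
  set r := a ⬝ᵥ c with hr
  have hpb := abs_dot_le_one ha hb
  have hqb := abs_dot_le_one hb hc
  have hrb := abs_dot_le_one ha hc
  rw [abs_le] at hpb hqb hrb
  -- key Cauchy-Schwarz estimate
  have key : (r - p*q)^2 ≤ (1 - p^2) * (1 - q^2) := by
    have h1 : (a - p • b) ⬝ᵥ (c - q • b) = r - p*q := by
      have hba : b ⬝ᵥ a = p := by rw [dotProduct_comm]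
      have hcb : b ⬝ᵥ c = q := rfl
      simp [sub_dotProduct, dotProduct_sub, smul_dotProduct,
        dotProduct_smul, smul_eq_mul, hba, hcb, hb, ← hr, ← hq]
      exact Or.inr (sub_eq_zero.mpr hp.symm)
    have h2 : (a - p • b) ⬝ᵥ (a - p • b) = 1 - p^2 := by
      have hba : b ⬝ᵥ a = p := by rw [dotProduct_comm]
      simp [sub_dotProduct, dotProduct_sub, smul_dotProduct,
        dotProduct_smul, smul_eq_mul, hba, hb, ha, ← hp]
      ring
    have h3 : (c - q • b) ⬝ᵥ (c - q • b) = 1 - q^2 := by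
      have hbc : c ⬝ᵥ b = q := by rw [dotProduct_comm]
      simp [sub_dotProduct, dotProduct_sub, smul_dotProduct,
        dotProduct_smul, smul_eq_mul, hbc, hb, hc, ← hq]
      ring
    have := dot_sq_le (a - p • b) (c - q • b)
    rw [h1, h2, h3] at this
    exact this
  rcases le_or_gt π (Real.arccos p + Real.arccos q) with hge | hlt
  · exact (Real.arccos_le_pi r).trans hge
  · have hA0 := Real.arccos_nonneg p
    have hB0 := Real.arccos_nonneg q
    have hcosadd : Real.cos (Real.arccos p + Real.arccos q)
        = p*q - Real.sqrt (1 - p^2) * Real.sqrt (1 - q^2) := by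
      rw [Real.cos_add, Real.cos_arccos hpb.1 hpb.2, Real.cos_arccos hqb.1 hqb.2,
        Real.sin_arccos, Real.sin_arccos]
    have hs : Real.sqrt (1 - p^2) * Real.sqrt (1 - q^2)
        = Real.sqrt ((1 - p^2) * (1 - q^2)) := by
      rw [← Real.sqrt_mul (by nlinarith)]
    have hsq : (Real.sqrt ((1 - p^2) * (1 - q^2)))^2 = (1 - p^2) * (1 - q^2) :=
      Real.sq_sqrt (by nlinarith)
    have hcle : Real.cos (Real.arccos p + Real.arccos q) ≤ r := by
      rw [hcosadd, hs]
      nlinarith [Real.sqrt_nonneg ((1 - p^2) * (1 - q^2))]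
    calc Real.arccos r ≤ Real.arccos (Real.cos (Real.arccos p + Real.arccos q)) :=
          arccos_anti hcle
      _ = Real.arccos p + Real.arccos q := Real.arccos_cos (by linarith) hlt.le

lemma tangent_cos {a θ : ℝ} (ha0 : 0 ≤ a) (ha : a ≤ π/2) (hθ0 : 0 ≤ θ) (hθ : θ ≤ π/2) :
    Real.sin a * (θ - a) ≤ Real.cos a - Real.cos θ := by
  have hmono := Real.strictMonoOn_sin.monotoneOn
  have hpi : (0:ℝ) < π := Real.pi_pos
  rcases lt_trichotomy a θ with h | h | h
  · obtain ⟨ξ, hξ, hd⟩ := exists_hasDerivAt_eq_slope Real.cos (fun t => -Real.sin t) h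
      Real.continuousOn_cos (fun t _ => Real.hasDerivAt_cos t)
    have hne : θ - a ≠ 0 := by linarith [hξ.1, hξ.2]
    have heq : Real.cos θ - Real.cos a = -Real.sin ξ * (θ - a) := by
      field_simp at hd
      linarith [hd]
    have hsle : Real.sin a ≤ Real.sin ξ := by
      apply hmono (by constructor <;> linarith) (by constructor <;> [linarith [hξ.1]; linarith [hξ.2]])
      exact hξ.1.le
    nlinarith
  · subst h; simp
  · obtain ⟨ξ, hξ, hd⟩ := exists_hasDerivAt_eq_slope Real.cos (fun t => -Real.sin t) h
      Real.continuousOn_cos (fun t _ => Real.hasDerivAt_cos t)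
    have hne : a - θ ≠ 0 := by linarith [hξ.1, hξ.2]
    have heq : Real.cos a - Real.cos θ = -Real.sin ξ * (a - θ) := by
      field_simp at hd
      linarith [hd]
    have hsle : Real.sin ξ ≤ Real.sin a := by
      apply hmono (by constructor <;> [linarith [hξ.1]; linarith [hξ.2]]) (by constructor <;> linarith)
      exact hξ.2.le
    nlinarith [Real.sin_nonneg_of_nonneg_of_le_pi (by linarith [hξ.1] : (0:ℝ) ≤ ξ) (by linarith [hξ.2])]

lemma one_sub_cos_le {a : ℝ} (ha0 : 0 ≤ a) (ha : a ≤ π/2) :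
    1 - Real.cos a ≤ a * Real.sin a := by
  have h := tangent_cos (θ := 0) ha0 ha le_rfl (by positivity)
  rw [Real.cos_zero] at h
  nlinarith



lemma rayleigh {m : Type*} [Fintype m] [DecidableEq m] {A : Matrix m m ℝ} (hA : A.IsHermitian)
    {β : ℝ} (hβ : ∀ i, hA.eigenvalues i ≤ β) (v : m → ℝ) :
    v ⬝ᵥ (A *ᵥ v) ≤ β * (v ⬝ᵥ v) := by
  classical
  set U : Matrix m m ℝ := (hA.eigenvectorUnitary : Matrix m m ℝ) with hUdef
  have hstar : star U = Uᵀ := by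
    ext i j
    simp [Matrix.star_apply]
  have hUU : U * star U = 1 := (Matrix.mem_unitaryGroup_iff).mp hA.eigenvectorUnitary.2
  have hsp : A = U * Matrix.diagonal hA.eigenvalues * star U := by
    have h := hA.spectral_theorem
    have hco : (RCLike.ofReal ∘ hA.eigenvalues : m → ℝ) = hA.eigenvalues := by
      funext i; simp
    rw [hco] at h
    exact h
  set w : m → ℝ := Uᵀ *ᵥ v with hw
  have hdotw : ∀ z : m → ℝ, w ⬝ᵥ z = v ⬝ᵥ (U *ᵥ z) := by
    intro z
    rw [hw, Matrix.mulVec_transpose, ← dotProduct_mulVec]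
  have hAv : A *ᵥ v = U *ᵥ (Matrix.diagonal hA.eigenvalues *ᵥ w) := by
    conv_lhs => rw [hsp]
    rw [← Matrix.mulVec_mulVec, ← Matrix.mulVec_mulVec, hstar, hw]
  have hnum : v ⬝ᵥ (A *ᵥ v) = w ⬝ᵥ (Matrix.diagonal hA.eigenvalues *ᵥ w) := by
    rw [hAv, hdotw]
  have hden : w ⬝ᵥ w = v ⬝ᵥ v := by
    rw [hdotw, Matrix.mulVec_mulVec, ← hstar, hUU, Matrix.one_mulVec]
  rw [hnum, ← hden]
  unfold dotProduct
  rw [Finset.mul_sum]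
  apply Finset.sum_le_sum
  intro i _
  rw [Matrix.mulVec_diagonal]
  nlinarith [hβ i, sq_nonneg (w i)]



variable {n : ℕ}

lemma proj_apply (x : Fin (n+1) → ℝ) (i j : Fin (n+1)) :
    proj x i j = (if i = j then (1:ℝ) else 0) - x i * x j := by
  simp [proj, Matrix.vecMulVec_apply, Matrix.one_apply, Matrix.sub_apply]

lemma proj_entry_symm (x : Fin (n+1) → ℝ) (i j : Fin (n+1)) :
    proj x i j = proj x j i := by
  simp [proj_apply, mul_comm, eq_comm]

lemma vecMulVec_mul_vecMulVec (x : Fin (n+1) → ℝ) (h : x ⬝ᵥ x = 1) :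
    Matrix.vecMulVec x x * Matrix.vecMulVec x x = Matrix.vecMulVec x x := by
  ext i j
  rw [Matrix.mul_apply]
  simp only [Matrix.vecMulVec_apply]
  have : ∀ l, (x i * x l) * (x l * x j) = (x i * x j) * (x l * x l) := fun l => by ring
  rw [Finset.sum_congr rfl (fun l _ => this l), ← Finset.mul_sum]
  have hh : ∑ l, x l * x l = 1 := h
  rw [hh, mul_one]

lemma proj_idem (x : Fin (n+1) → ℝ) (h : x ⬝ᵥ x = 1) :
    proj x * proj x = proj x := by
  unfold proj
  rw [sub_mul, mul_sub, mul_sub]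
  simp only [one_mul, mul_one, vecMulVec_mul_vecMulVec x h]
  abel

lemma trace_vecMulVec (x y : Fin (n+1) → ℝ) :
    Matrix.trace (Matrix.vecMulVec x y) = x ⬝ᵥ y := by
  simp [Matrix.trace, Matrix.diag, Matrix.vecMulVec_apply, dotProduct]

lemma trace_proj (x : Fin (n+1) → ℝ) (h : x ⬝ᵥ x = 1) :
    Matrix.trace (proj x) = (n : ℝ) := by
  unfold proj
  rw [Matrix.trace_sub, Matrix.trace_one, trace_vecMulVec, h]
  simp

lemma trace_vmv_mul (x y : Fin (n+1) → ℝ) :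
    Matrix.trace (Matrix.vecMulVec x x * Matrix.vecMulVec y y) = (x ⬝ᵥ y)^2 := by
  simp only [Matrix.trace, Matrix.diag, Matrix.mul_apply, Matrix.vecMulVec_apply]
  have : ∀ i ∈ Finset.univ, ∑ j, (x i * x j) * (y j * y i) = (x i * y i) * (x ⬝ᵥ y) := by
    intro i _
    rw [dotProduct, Finset.mul_sum]
    exact Finset.sum_congr rfl (fun j _ => by ring)
  rw [Finset.sum_congr rfl this, ← Finset.sum_mul]
  rw [dotProduct, sq]

lemma trace_proj_mul (x y : Fin (n+1) → ℝ) (hx : x ⬝ᵥ x = 1) (hy : y ⬝ᵥ y = 1) :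
    Matrix.trace (proj x * proj y) = (n : ℝ) - 1 + (x ⬝ᵥ y)^2 := by
  unfold proj
  rw [sub_mul, mul_sub, mul_sub]
  simp only [one_mul, mul_one]
  rw [Matrix.trace_sub, Matrix.trace_sub, Matrix.trace_sub, Matrix.trace_one,
    trace_vecMulVec x x, trace_vecMulVec y y, trace_vmv_mul, hx, hy]
  simp [Fintype.card_fin]
  push_cast
  ring

lemma sum_entries_mul (A B : Matrix (Fin (n+1)) (Fin (n+1)) ℝ) :
    ∑ β, ∑ γ, A β γ * B β γ = Matrix.trace (A * Bᵀ) := by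
  simp only [Matrix.trace, Matrix.diag, Matrix.mul_apply, Matrix.transpose_apply]

lemma proj_transpose (x : Fin (n+1) → ℝ) : (proj x)ᵀ = proj x := by
  ext i j
  rw [Matrix.transpose_apply, proj_entry_symm]


variable {n : ℕ}







variable {N : ℕ} (G : SimpleGraph (Fin N)) [DecidableRel G.Adj]
  (k : Fin N → Fin N → ℝ) (x : Fin N → Fin (n + 1) → ℝ)

lemma W_eq (p q : Fin N × Fin (n+1)) :
    (∑ α, proj (x p.1) p.2 α * proj (x q.1) q.2 α)
      = (proj (x p.1) * proj (x q.1)) p.2 q.2 := by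
  rw [Matrix.mul_apply]
  exact Finset.sum_congr rfl fun α _ => by rw [proj_entry_symm (x q.1)]

lemma step1 :
    (∑ α : Fin (n+1), (fun p : Fin N × Fin (n+1) => proj (x p.1) p.2 α) ⬝ᵥ
      (Bmat G k x *ᵥ fun p : Fin N × Fin (n+1) => proj (x p.1) p.2 α))
    = ∑ p : Fin N × Fin (n+1), ∑ q : Fin N × Fin (n+1),
        Bmat G k x p q * (proj (x p.1) * proj (x q.1)) p.2 q.2 := by
  simp only [dotProduct, Matrix.mulVec, Finset.mul_sum]
  rw [Finset.sum_comm]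
  apply Finset.sum_congr rfl; intro p _
  rw [Finset.sum_comm]
  apply Finset.sum_congr rfl; intro q _
  rw [← W_eq x p q, Finset.mul_sum]
  exact Finset.sum_congr rfl fun α _ => by ring

lemma key_block (hunit : ∀ i, x i ⬝ᵥ x i = 1) (i j : Fin N) :
    (∑ β, ∑ γ, Bmat G k x (i,β) (j,γ) * (proj (x i) * proj (x j)) β γ)
    = (if j = i then (-(∑ l ∈ G.neighborFinset i, k i l * (x l ⬝ᵥ x i))) * n else 0)
      + (if G.Adj i j then k i j * ((n:ℝ) - 1 + (x i ⬝ᵥ x j)^2) else 0) := by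
  by_cases hij : i = j
  · subst hij
    have hadj : ¬ G.Adj i i := G.irrefl
    simp only [eq_self_iff_true, if_true, if_neg hadj, add_zero]
    have hB : ∀ β γ, Bmat G k x (i,β) (i,γ)
        = (-(∑ l ∈ G.neighborFinset i, k i l * (x l ⬝ᵥ x i))) * proj (x i) β γ := by
      intro β γ
      simp [Bmat, Matrix.smul_apply, smul_eq_mul]
    calc (∑ β, ∑ γ, Bmat G k x (i,β) (i,γ) * (proj (x i) * proj (x i)) β γ)
        = (-(∑ l ∈ G.neighborFinset i, k i l * (x l ⬝ᵥ x i)))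
            * ∑ β, ∑ γ, proj (x i) β γ * proj (x i) β γ := by
          rw [Finset.mul_sum]
          apply Finset.sum_congr rfl; intro β _
          rw [Finset.mul_sum]
          apply Finset.sum_congr rfl; intro γ _
          rw [hB, proj_idem (x i) (hunit i)]
          ring
      _ = _ := by
          rw [sum_entries_mul, proj_transpose, proj_idem (x i) (hunit i),
            trace_proj (x i) (hunit i)]
  · have hne : (i,(0:Fin (n+1))).1 = j → False := fun h => hij h
    by_cases hadj : G.Adj i j
    · have hB : ∀ β γ, Bmat G k x (i,β) (j,γ)
          = k i j * (proj (x i) * proj (x j)) β γ := by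
        intro β γ
        simp [Bmat, hij, hadj, Matrix.smul_apply, smul_eq_mul]
      have hji : ¬ (j = i) := fun h => hij h.symm
      simp only [if_neg hji, if_pos hadj, zero_add]
      calc (∑ β, ∑ γ, Bmat G k x (i,β) (j,γ) * (proj (x i) * proj (x j)) β γ)
          = k i j * ∑ β, ∑ γ, (proj (x i) * proj (x j)) β γ * (proj (x i) * proj (x j)) β γ := by
            rw [Finset.mul_sum]
            apply Finset.sum_congr rfl; intro β _
            rw [Finset.mul_sum]
            apply Finset.sum_congr rfl; intro γ _
            rw [hB]
            ring
        _ = k i j * ((n:ℝ) - 1 + (x i ⬝ᵥ x j)^2) := by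
            rw [sum_entries_mul]
            have ht : (proj (x i) * proj (x j)) * (proj (x i) * proj (x j))ᵀ
                = proj (x i) * proj (x j) * proj (x i) := by
              rw [Matrix.transpose_mul, proj_transpose, proj_transpose]
              calc proj (x i) * proj (x j) * (proj (x j) * proj (x i))
                  = proj (x i) * (proj (x j) * proj (x j)) * proj (x i) := by
                    noncomm_ring
                _ = proj (x i) * proj (x j) * proj (x i) := by
                    rw [proj_idem (x j) (hunit j)]
            rw [ht]
            have ht2 : Matrix.trace (proj (x i) * proj (x j) * proj (x i))
                = Matrix.trace (proj (x i) * proj (x j)) := by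
              rw [Matrix.trace_mul_comm, ← Matrix.mul_assoc, proj_idem (x i) (hunit i)]
            rw [ht2, trace_proj_mul (x i) (x j) (hunit i) (hunit j)]
    · have hji : ¬ (j = i) := fun h => hij h.symm
      simp only [if_neg hji, if_neg hadj, add_zero]
      have hB : ∀ β γ, Bmat G k x (i,β) (j,γ) = 0 := by
        intro β γ
        simp [Bmat, hij, hadj]
      simp [hB]

lemma quad_sum (hunit : ∀ i, x i ⬝ᵥ x i = 1) :
    (∑ α : Fin (n+1), (fun p : Fin N × Fin (n+1) => proj (x p.1) p.2 α) ⬝ᵥ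
      (Bmat G k x *ᵥ fun p : Fin N × Fin (n+1) => proj (x p.1) p.2 α))
    = ∑ i, ∑ j ∈ G.neighborFinset i,
        k i j * ((1 - x j ⬝ᵥ x i) * ((n:ℝ) - 1 - x j ⬝ᵥ x i)) := by
  rw [step1]
  rw [Fintype.sum_prod_type]
  have h1 : ∀ i : Fin N, ∀ β : Fin (n+1),
      (∑ q : Fin N × Fin (n+1), Bmat G k x (i,β) q * (proj (x i) * proj (x q.1)) β q.2)
      = ∑ j : Fin N, ∑ γ, Bmat G k x (i,β) (j,γ) * (proj (x i) * proj (x j)) β γ := by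
    intro i β
    rw [Fintype.sum_prod_type]
  calc (∑ i, ∑ β, ∑ q : Fin N × Fin (n+1),
          Bmat G k x (i,β) q * (proj (x i) * proj (x q.1)) β q.2)
      = ∑ i, ∑ j : Fin N, ∑ β, ∑ γ,
          Bmat G k x (i,β) (j,γ) * (proj (x i) * proj (x j)) β γ := by
        apply Finset.sum_congr rfl; intro i _
        rw [Finset.sum_congr rfl (fun β _ => h1 i β), Finset.sum_comm]
    _ = ∑ i, ∑ j : Fin N,
          ((if j = i then (-(∑ l ∈ G.neighborFinset i, k i l * (x l ⬝ᵥ x i))) * n else 0)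
           + (if G.Adj i j then k i j * ((n:ℝ) - 1 + (x i ⬝ᵥ x j)^2) else 0)) := by
        apply Finset.sum_congr rfl; intro i _
        exact Finset.sum_congr rfl fun j _ => key_block G k x hunit i j
    _ = ∑ i, ((-(∑ l ∈ G.neighborFinset i, k i l * (x l ⬝ᵥ x i))) * n
           + ∑ j ∈ G.neighborFinset i, k i j * ((n:ℝ) - 1 + (x i ⬝ᵥ x j)^2)) := by
        apply Finset.sum_congr rfl; intro i _
        rw [Finset.sum_add_distrib]
        congr 1
        · rw [Finset.sum_ite_eq' Finset.univ i
            (fun _ => (-(∑ l ∈ G.neighborFinset i, k i l * (x l ⬝ᵥ x i))) * (n:ℝ))]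
          simp
        · rw [SimpleGraph.neighborFinset_eq_filter, Finset.sum_filter]
    _ = ∑ i, ∑ j ∈ G.neighborFinset i,
          k i j * ((1 - x j ⬝ᵥ x i) * ((n:ℝ) - 1 - x j ⬝ᵥ x i)) := by
        apply Finset.sum_congr rfl; intro i _
        rw [neg_mul, Finset.sum_mul, neg_add_eq_sub, ← Finset.sum_sub_distrib]
        apply Finset.sum_congr rfl; intro j _
        rw [dotProduct_comm (x i) (x j)]
        ring
  
lemma denom_sum (hunit : ∀ i, x i ⬝ᵥ x i = 1) :
    (∑ α : Fin (n+1), (fun p : Fin N × Fin (n+1) => proj (x p.1) p.2 α) ⬝ᵥ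
      (fun p : Fin N × Fin (n+1) => proj (x p.1) p.2 α))
    = (N : ℝ) * n := by
  simp only [dotProduct]
  rw [Finset.sum_comm]
  have h1 : ∀ p : Fin N × Fin (n+1),
      (∑ α, proj (x p.1) p.2 α * proj (x p.1) p.2 α) = proj (x p.1) p.2 p.2 := by
    intro p
    rw [W_eq x p p, proj_idem (x p.1) (hunit p.1)]
  rw [Finset.sum_congr rfl (fun p _ => h1 p), Fintype.sum_prod_type]
  have h2 : ∀ i : Fin N, (∑ β, proj (x i) β β) = (n:ℝ) := by
    intro i
    rw [← trace_proj (x i) (hunit i)]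
    rfl
  rw [Finset.sum_congr rfl (fun i _ => h2 i), Finset.sum_const, Finset.card_univ]
  simp [mul_comm]



variable {V : Type*} [DecidableEq V] (G : SimpleGraph V)

def ConnOn (S : Finset V) : Prop :=
  ∀ u ∈ S, ∀ v ∈ S, ∃ w : G.Walk u v, ∀ z ∈ w.support, z ∈ S

def lenSet (S : Finset V) (u v : V) : Set ℕ :=
  {L | ∃ w : G.Walk u v, w.length = L ∧ ∀ z ∈ w.support, z ∈ S}

def dS (S : Finset V) (u v : V) : ℕ := sInf (lenSet G S u v)

lemma dS_le (S : Finset V) {u v : V} (w : G.Walk u v) (hw : ∀ z ∈ w.support, z ∈ S) :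
    dS G S u v ≤ w.length := Nat.sInf_le ⟨w, rfl, hw⟩

lemma dS_self (S : Finset V) {u : V} (hu : u ∈ S) : dS G S u u = 0 := by
  have := dS_le G S (SimpleGraph.Walk.nil : G.Walk u u) (by simp [hu])
  simpa using this

lemma exists_min_walk (S : Finset V) {u v : V} (h : (lenSet G S u v).Nonempty) :
    ∃ w : G.Walk u v, w.length = dS G S u v ∧ ∀ z ∈ w.support, z ∈ S := by
  have := Nat.sInf_mem h
  obtain ⟨w, hw1, hw2⟩ := this
  exact ⟨w, hw1, hw2⟩

lemma exists_adj_start {T : Finset V} {a b : V} (w : G.Walk a b) (hne : a ≠ b)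
    (hT : ∀ z ∈ w.support, z ∈ T) : ∃ c, c ∈ T ∧ c ≠ a ∧ G.Adj a c := by
  cases w with
  | nil => exact absurd rfl hne
  | @cons _ c _ h q =>
    refine ⟨c, ?_, (G.ne_of_adj h).symm, h⟩
    apply hT
    rw [SimpleGraph.Walk.support_cons]
    exact List.mem_cons_of_mem _ q.start_mem_support

lemma remove_far (S : Finset V) (hconn : ConnOn G S) {u : V} (hu : u ∈ S)
    (h2 : ∃ v ∈ S, v ≠ u) :
    ∃ z ∈ S, z ≠ u ∧ ConnOn G (S.erase z) ∧ ∃ w ∈ S.erase z, G.Adj w z := by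
  obtain ⟨z, hzS, hzmax⟩ := Finset.exists_max_image S (dS G S u) ⟨u, hu⟩
  obtain ⟨v0, hv0S, hv0ne⟩ := h2
  have hne : ∀ v ∈ S, (lenSet G S u v).Nonempty := by
    intro v hv
    obtain ⟨w, hw⟩ := hconn u hu v hv
    exact ⟨w.length, w, rfl, hw⟩
  have hd1 : 1 ≤ dS G S u v0 := by
    obtain ⟨w, hwlen, hwS⟩ := exists_min_walk G S (hne v0 hv0S)
    rcases Nat.eq_zero_or_pos w.length with h0 | hp
    · exact absurd (SimpleGraph.Walk.eq_of_length_eq_zero h0).symm hv0ne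
    · omega
  have hzu : z ≠ u := by
    intro h
    subst h
    have := hzmax v0 hv0S
    rw [dS_self G S hu] at this
    omega
  -- every vertex of S.erase z is reachable from u avoiding z
  have hreach : ∀ v ∈ S.erase z, ∃ w : G.Walk u v, ∀ y ∈ w.support, y ∈ S.erase z := by
    intro v hv
    have hvS : v ∈ S := Finset.mem_of_mem_erase hv
    have hvz : v ≠ z := Finset.ne_of_mem_erase hv
    obtain ⟨w, hwlen, hwS⟩ := exists_min_walk G S (hne v hvS)
    by_cases hz : z ∈ w.support
    · exfalso
      have hspec := w.take_spec hz
      have hlen : (w.takeUntil z hz).length + (w.dropUntil z hz).length = w.length := by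
        rw [← SimpleGraph.Walk.length_append, hspec]
      have hdrop1 : 1 ≤ (w.dropUntil z hz).length := by
        rcases Nat.eq_zero_or_pos (w.dropUntil z hz).length with h0 | hp
        · exact absurd (SimpleGraph.Walk.eq_of_length_eq_zero h0) hvz.symm
        · omega
      have htake : dS G S u z ≤ (w.takeUntil z hz).length := by
        apply dS_le
        intro y hy
        exact hwS y (SimpleGraph.Walk.support_takeUntil_subset w hz hy)
      have hmax := hzmax v hvS
      omega
    · refine ⟨w, fun y hy => Finset.mem_erase.mpr ⟨?_, hwS y hy⟩⟩
      intro h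
      subst h
      exact hz hy
  have hconn' : ConnOn G (S.erase z) := by
    intro a ha b hb
    obtain ⟨wa, hwa⟩ := hreach a ha
    obtain ⟨wb, hwb⟩ := hreach b hb
    refine ⟨wa.reverse.append wb, ?_⟩
    intro y hy
    rw [SimpleGraph.Walk.mem_support_append_iff] at hy
    rcases hy with hy | hy
    · rw [SimpleGraph.Walk.support_reverse] at hy
      exact hwa y (List.mem_reverse.mp hy)
    · exact hwb y hy
  -- neighbor of z inside S.erase z
  obtain ⟨w, hwlen, hwS⟩ := exists_min_walk G S (hne z hzS)
  have hrev : ∀ y ∈ w.reverse.support, y ∈ S := by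
    intro y hy
    rw [SimpleGraph.Walk.support_reverse] at hy
    exact hwS y (List.mem_reverse.mp hy)
  obtain ⟨c, hcS, hcz, hadj⟩ := exists_adj_start G w.reverse hzu hrev
  exact ⟨z, hzS, hzu, hconn', c, Finset.mem_erase.mpr ⟨hcz, hcS⟩, hadj.symm⟩

lemma center_exists (S : Finset V) :
    S.Nonempty → ConnOn G S →
    ∃ r ∈ S, ∀ v ∈ S, ∃ w : G.Walk r v, (∀ z ∈ w.support, z ∈ S) ∧ 2 * w.length ≤ S.card := by
  induction S using Finset.strongInduction with
  | _ S IH =>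
    intro hne hconn
    by_cases hsmall : S.card ≤ 2
    · obtain ⟨u, hu⟩ := hne
      refine ⟨u, hu, fun v hv => ?_⟩
      obtain ⟨w, hw⟩ := hconn u hu v hv
      refine ⟨w.bypass, ?_, ?_⟩
      · intro z hz
        exact hw z (SimpleGraph.Walk.support_bypass_subset w hz)
      · have hnodup : w.bypass.support.Nodup := (SimpleGraph.Walk.bypass_isPath w).support_nodup
        have hsublist : w.bypass.support.toFinset ⊆ S := by
          intro z hz
          exact hw z (SimpleGraph.Walk.support_bypass_subset w (List.mem_toFinset.mp hz))
        have hcard : w.bypass.support.length ≤ S.card := by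
          rw [← List.toFinset_card_of_nodup hnodup]
          exact Finset.card_le_card hsublist
        have hlen := SimpleGraph.Walk.length_support w.bypass
        omega
    · push_neg at hsmall
      have hS3 : 3 ≤ S.card := hsmall
      obtain ⟨u0, hu0⟩ := hne
      have h2 : ∃ v ∈ S, v ≠ u0 := Finset.exists_mem_ne (by omega) u0
      obtain ⟨z1, hz1S, hz1ne, hconn1, w1, hw1mem, hw1adj⟩ := remove_far G S hconn hu0 h2
      have hcard1 : (S.erase z1).card = S.card - 1 := Finset.card_erase_of_mem hz1S
      have h2' : ∃ v ∈ S.erase z1, v ≠ w1 :=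
        Finset.exists_mem_ne (by omega) w1
      obtain ⟨z2, hz2S1, hz2ne, hconn2, y, hymem, hyadj⟩ :=
        remove_far G (S.erase z1) hconn1 hw1mem h2'
      set S2 := (S.erase z1).erase z2 with hS2def
      have hcard2 : S2.card = S.card - 2 := by
        rw [hS2def, Finset.card_erase_of_mem hz2S1, hcard1]
        omega
      have hssub : S2 ⊂ S := by
        apply ssubset_of_subset_of_ssubset (Finset.erase_subset _ _)
        exact Finset.erase_ssubset hz1S
      have hne2 : S2.Nonempty := by
        rw [← Finset.card_pos]
        omega
      obtain ⟨r, hrS2, H⟩ := IH S2 hssub hne2 hconn2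
      have hS2subS : S2 ⊆ S := hssub.subset
      have hw1S2 : w1 ∈ S2 := Finset.mem_erase.mpr ⟨fun h => hz2ne h.symm, hw1mem⟩
      refine ⟨r, hS2subS hrS2, fun v hv => ?_⟩
      by_cases hvS2 : v ∈ S2
      · obtain ⟨w, hwsup, hwlen⟩ := H v hvS2
        have hcle := Finset.card_le_card hS2subS
        exact ⟨w, fun z hz => hS2subS (hwsup z hz), by omega⟩
      · have hcases : v = z2 ∨ v = z1 := by
          rw [hS2def] at hvS2
          by_cases h1 : v = z2
          · exact Or.inl h1
          · by_cases h2 : v = z1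
            · exact Or.inr h2
            · exfalso
              exact hvS2 (Finset.mem_erase.mpr ⟨h1, Finset.mem_erase.mpr ⟨h2, hv⟩⟩)
        rcases hcases with hv2 | hv1
        · subst hv2
          obtain ⟨w, hwsup, hwlen⟩ := H y hymem
          refine ⟨w.concat hyadj, ?_, ?_⟩
          · intro z hz
            rw [SimpleGraph.Walk.support_concat] at hz
            rcases List.mem_append.mp hz with hz | hz
            · exact hS2subS (hwsup z hz)
            · rw [List.mem_singleton.mp hz]
              exact Finset.mem_of_mem_erase hz2S1
          · rw [SimpleGraph.Walk.length_concat]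
            omega
        · subst hv1
          obtain ⟨w, hwsup, hwlen⟩ := H w1 hw1S2
          refine ⟨w.concat hw1adj, ?_, ?_⟩
          · intro z hz
            rw [SimpleGraph.Walk.support_concat] at hz
            rcases List.mem_append.mp hz with hz | hz
            · exact hS2subS (hwsup z hz)
            · rw [List.mem_singleton.mp hz]
              exact hz1S
          · rw [SimpleGraph.Walk.length_concat]
            omega





variable {V : Type*} [DecidableEq V] {G : SimpleGraph V}

lemma getVert_inj {a b : V} {w : G.Walk a b} (hw : w.IsPath) :
    ∀ s t : ℕ, s ≤ w.length → t ≤ w.length → w.getVert s = w.getVert t → s = t := by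
  induction w with
  | nil =>
    intro s t hs ht _
    simp at hs ht
    omega
  | @cons u c b h q ih =>
    rw [SimpleGraph.Walk.cons_isPath_iff] at hw
    intro s t hs ht heq
    rcases s with _ | s <;> rcases t with _ | t
    · rfl
    · exfalso
      apply hw.2
      rw [SimpleGraph.Walk.mem_support_iff_exists_getVert]
      refine ⟨t, ?_, ?_⟩
      · simpa [SimpleGraph.Walk.getVert_zero] using heq.symm
      · simpa [SimpleGraph.Walk.length_cons] using ht
    · exfalso
      apply hw.2
      rw [SimpleGraph.Walk.mem_support_iff_exists_getVert]
      refine ⟨s, ?_, ?_⟩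
      · simpa [SimpleGraph.Walk.getVert_zero] using heq
      · simpa [SimpleGraph.Walk.length_cons] using hs
    · have := ih hw.1 s t (by simpa [SimpleGraph.Walk.length_cons] using hs)
        (by simpa [SimpleGraph.Walk.length_cons] using ht)
        (by simpa [SimpleGraph.Walk.getVert_cons_succ] using heq)
      omega

lemma path_pairs_sum {N : ℕ} {G : SimpleGraph (Fin N)} [DecidableRel G.Adj]
    (F : Fin N → Fin N → ℝ) (hF : ∀ i j, G.Adj i j → 0 ≤ F i j)
    {a b : Fin N} (w : G.Walk a b) (hw : w.IsPath) :
    (∑ t ∈ Finset.range w.length,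
      (F (w.getVert t) (w.getVert (t+1)) + F (w.getVert (t+1)) (w.getVert t)))
      ≤ ∑ i, ∑ j ∈ G.neighborFinset i, F i j := by
  classical
  have hRHS : (∑ i, ∑ j ∈ G.neighborFinset i, F i j)
      = ∑ p ∈ Finset.univ.filter (fun p : Fin N × Fin N => G.Adj p.1 p.2), F p.1 p.2 := by
    rw [Finset.sum_filter, Fintype.sum_prod_type]
    apply Finset.sum_congr rfl; intro i _
    rw [SimpleGraph.neighborFinset_eq_filter, Finset.sum_filter]
  rw [hRHS]
  set T1 := (Finset.range w.length).image
    (fun t => (w.getVert t, w.getVert (t+1))) with hT1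
  set T2 := (Finset.range w.length).image
    (fun t => (w.getVert (t+1), w.getVert t)) with hT2
  have hinj1 : ∀ s ∈ Finset.range w.length, ∀ t ∈ Finset.range w.length,
      (w.getVert s, w.getVert (s+1)) = (w.getVert t, w.getVert (t+1)) → s = t := by
    intro s hs t ht h
    rw [Finset.mem_range] at hs ht
    rw [Prod.mk.injEq] at h
    exact getVert_inj hw s t (by omega) (by omega) h.1
  have hinj2 : ∀ s ∈ Finset.range w.length, ∀ t ∈ Finset.range w.length,
      (w.getVert (s+1), w.getVert s) = (w.getVert (t+1), w.getVert t) → s = t := by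
    intro s hs t ht h
    rw [Finset.mem_range] at hs ht
    rw [Prod.mk.injEq] at h
    exact getVert_inj hw s t (by omega) (by omega) h.2
  have hsum1 : (∑ t ∈ Finset.range w.length, F (w.getVert t) (w.getVert (t+1)))
      = ∑ p ∈ T1, F p.1 p.2 := by
    rw [hT1, Finset.sum_image hinj1]
  have hsum2 : (∑ t ∈ Finset.range w.length, F (w.getVert (t+1)) (w.getVert t))
      = ∑ p ∈ T2, F p.1 p.2 := by
    rw [hT2, Finset.sum_image hinj2]
  have hdisj : Disjoint T1 T2 := by
    rw [Finset.disjoint_left]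
    intro p hp1 hp2
    rw [hT1, Finset.mem_image] at hp1
    rw [hT2, Finset.mem_image] at hp2
    obtain ⟨s, hs, hps⟩ := hp1
    obtain ⟨t, ht, hpt⟩ := hp2
    rw [Finset.mem_range] at hs ht
    rw [← hpt, Prod.mk.injEq] at hps
    have h1 := getVert_inj hw s (t+1) (by omega) (by omega) hps.1
    have h2 := getVert_inj hw (s+1) t (by omega) (by omega) hps.2
    omega
  have hsub : T1 ∪ T2 ⊆ Finset.univ.filter (fun p : Fin N × Fin N => G.Adj p.1 p.2) := by
    intro p hp
    rw [Finset.mem_union] at hp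
    rw [Finset.mem_filter]
    refine ⟨Finset.mem_univ _, ?_⟩
    rcases hp with hp | hp
    · rw [hT1, Finset.mem_image] at hp
      obtain ⟨t, ht, hpt⟩ := hp
      rw [Finset.mem_range] at ht
      rw [← hpt]
      exact w.adj_getVert_succ ht
    · rw [hT2, Finset.mem_image] at hp
      obtain ⟨t, ht, hpt⟩ := hp
      rw [Finset.mem_range] at ht
      rw [← hpt]
      exact (w.adj_getVert_succ ht).symm
  calc (∑ t ∈ Finset.range w.length,
      (F (w.getVert t) (w.getVert (t+1)) + F (w.getVert (t+1)) (w.getVert t)))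
      = (∑ p ∈ T1, F p.1 p.2) + (∑ p ∈ T2, F p.1 p.2) := by
        rw [Finset.sum_add_distrib, hsum1, hsum2]
    _ = ∑ p ∈ T1 ∪ T2, F p.1 p.2 := (Finset.sum_union hdisj).symm
    _ ≤ ∑ p ∈ Finset.univ.filter (fun p : Fin N × Fin N => G.Adj p.1 p.2), F p.1 p.2 := by
        apply Finset.sum_le_sum_of_subset_of_nonneg hsub
        intro p hp _
        rw [Finset.mem_filter] at hp
        exact hF p.1 p.2 hp.2

lemma path_angle_sum {N n : ℕ} (x : Fin N → Fin (n+1) → ℝ) (hunit : ∀ i, x i ⬝ᵥ x i = 1)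
    {G : SimpleGraph (Fin N)} {a b : Fin N} (w : G.Walk a b) :
    Real.arccos (x a ⬝ᵥ x b) ≤
      ∑ t ∈ Finset.range w.length, Real.arccos (x (w.getVert t) ⬝ᵥ x (w.getVert (t+1))) := by
  induction w with
  | nil =>
    simp [hunit, Real.arccos_one]
  | @cons u c d h q ih =>
    have hstep : Real.arccos (x u ⬝ᵥ x d)
        ≤ Real.arccos (x u ⬝ᵥ x c) + Real.arccos (x c ⬝ᵥ x d) :=
      arccos_triangle (hunit u) (hunit c) (hunit d)
    have hlen : (q.cons h).length = q.length + 1 := SimpleGraph.Walk.length_cons _ _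
    rw [hlen, Finset.sum_range_succ']
    have h0 : (q.cons h).getVert 0 = u := SimpleGraph.Walk.getVert_zero _
    have hsucc : ∀ t, (q.cons h).getVert (t+1) = q.getVert t := fun t => by
      simp [SimpleGraph.Walk.getVert_cons_succ]
    rw [h0]
    simp only [hsucc]
    rw [SimpleGraph.Walk.getVert_zero]
    calc Real.arccos (x u ⬝ᵥ x d)
        ≤ Real.arccos (x u ⬝ᵥ x c) + Real.arccos (x c ⬝ᵥ x d) := hstep
      _ ≤ Real.arccos (x u ⬝ᵥ x c)
            + ∑ t ∈ Finset.range q.length, Real.arccos (x (q.getVert t) ⬝ᵥ x (q.getVert (t+1))) := by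
          linarith [ih]
      _ = _ := by ring


end LoheAux


/-- Auxiliary: `N (1 - cos (π/N)) ≤ 2` for `N ≥ 2`. -/
lemma LoheAux.N_one_sub_cos {N : ℕ} (hN : 2 ≤ N) :
    (N:ℝ) * (1 - Real.cos (π / N)) ≤ 2 := by
  rcases eq_or_lt_of_le hN with h2 | h3
  · have : (N:ℝ) = 2 := by exact_mod_cast h2.symm
    rw [this]
    norm_num [Real.cos_pi_div_two]
  · have hN3 : (3:ℝ) ≤ (N:ℝ) := by exact_mod_cast h3
    have hNpos : (0:ℝ) < N := by linarith
    have hc := Real.one_sub_sq_div_two_le_cos (x := π / N)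
    have h1 : 1 - Real.cos (π / N) ≤ (π / N)^2 / 2 := by linarith
    have hπ : π < 3.15 := by
      have := Real.pi_lt_d2
      norm_num at this ⊢
      linarith
    have hπ0 : 0 < π := Real.pi_pos
    have key : (N:ℝ) * ((π / N)^2 / 2) ≤ 2 := by
      have he : (N:ℝ) * ((π / N)^2 / 2) = π^2 / (2 * N) := by
        field_simp
      rw [he]
      rw [div_le_iff₀ (by positivity)]
      nlinarith
    nlinarith [mul_le_mul_of_nonneg_left h1 hNpos.le]

/-- At a dispersed configuration of unit vectors connected by a network with minimal
coupling gain `K`, the largest eigenvalue `β(x)` of `B(x)` satisfies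
`β(x) ≥ (K/(n+1)) (n − 1 − cos(π/N)) (1 − cos(π/N)) `; in particular `β(x) > 0`. -/
theorem largest_eigenvalue_lower_bound_dispersed
    {n N : ℕ} (hn : 2 ≤ n) (hN : 2 ≤ N)
    (G : SimpleGraph (Fin N)) [DecidableRel G.Adj] (hconn : G.Connected)
    (k : Fin N → Fin N → ℝ) (hsymm : ∀ i j, k i j = k j i)
    (hpos : ∀ i j, G.Adj i j → 0 < k i j)
    (K : ℝ) (hK : IsLeast {r : ℝ | ∃ i j, G.Adj i j ∧ r = k i j} K)
    (x : Fin N → Fin (n + 1) → ℝ) (hunit : ∀ i, x i ⬝ᵥ x i = 1)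
    (hdisp : ¬ ∃ y : Fin (n + 1) → ℝ, y ≠ 0 ∧ ∀ i, 0 < x i ⬝ᵥ y)
    (hB : (Bmat G k x).IsHermitian) :
    K / ((n : ℝ) + 1) * ((n : ℝ) - 1 - Real.cos (π / (N : ℝ))) * (1 - Real.cos (π / (N : ℝ)))
      ≤ Finset.univ.sup' ⟨(⟨0, by omega⟩, (0 : Fin (n + 1))), Finset.mem_univ _⟩
          hB.eigenvalues ∧
    0 < Finset.univ.sup' ⟨(⟨0, by omega⟩, (0 : Fin (n + 1))), Finset.mem_univ _⟩
          hB.eigenvalues := by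
  classical
  set β := Finset.univ.sup' ⟨(⟨0, by omega⟩, (0 : Fin (n + 1))), Finset.mem_univ _⟩
      hB.eigenvalues with hβdef
  set q : ℝ := Real.cos (π / N) with hqdef
  -- basic numeric facts
  have hNR : (2:ℝ) ≤ (N:ℝ) := by exact_mod_cast hN
  have hnR : (2:ℝ) ≤ (n:ℝ) := by exact_mod_cast hn
  have hNpos : (0:ℝ) < N := by linarith
  have hπ0 : (0:ℝ) < π := Real.pi_pos
  have haN0 : 0 < π / N := by positivity
  have haNle : π / N ≤ π / 2 := by
    apply div_le_div_of_nonneg_left hπ0.le (by norm_num) hNR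
  have hq0 : 0 ≤ q := Real.cos_nonneg_of_mem_Icc ⟨by linarith, haNle⟩
  have hq1 : q < 1 := by
    have h := Real.strictAntiOn_cos (Set.mem_Icc.mpr ⟨le_refl 0, hπ0.le⟩)
      (Set.mem_Icc.mpr ⟨haN0.le, by linarith⟩) haN0
    rw [Real.cos_zero] at h
    exact h
  have hs1 : 0 ≤ Real.sin (π / N) :=
    Real.sin_nonneg_of_nonneg_of_le_pi haN0.le (by linarith)
  have hc0 : 1 - q ≤ (π / N) * Real.sin (π / N) :=
    LoheAux.one_sub_cos_le haN0.le haNle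
  have hKpos : 0 < K := by
    obtain ⟨i0, j0, hadj0, hKeq⟩ := hK.1
    rw [hKeq]
    exact hpos _ _ hadj0
  have hKle : ∀ i j, G.Adj i j → K ≤ k i j := fun i j h => hK.2 ⟨i, j, h, rfl⟩
  have hβub : ∀ p, hB.eigenvalues p ≤ β := fun p => Finset.le_sup' _ (Finset.mem_univ p)
  have habs : ∀ i j : Fin N, |x i ⬝ᵥ x j| ≤ 1 := fun i j =>
    LoheAux.abs_dot_le_one (hunit i) (hunit j)
  -- the F function and its nonnegativity on edges
  set F : Fin N → Fin N → ℝ :=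
    fun i j => k i j * ((1 - x j ⬝ᵥ x i) * ((n:ℝ) - 1 - x j ⬝ᵥ x i)) with hFdef
  have hFnonneg : ∀ i j, G.Adj i j → 0 ≤ F i j := by
    intro i j hadj
    have h1 := abs_le.mp (habs j i)
    have hk := (hpos i j hadj).le
    apply mul_nonneg hk
    nlinarith [h1.1, h1.2]
  -- Rayleigh upper bound on the total sum
  have hmain : (∑ i, ∑ j ∈ G.neighborFinset i, F i j) ≤ β * ((N:ℝ) * n) := by
    have h1 : ∀ α : Fin (n+1),
        ((fun p : Fin N × Fin (n+1) => proj (x p.1) p.2 α) ⬝ᵥ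
          (Bmat G k x *ᵥ fun p : Fin N × Fin (n+1) => proj (x p.1) p.2 α))
        ≤ β * ((fun p : Fin N × Fin (n+1) => proj (x p.1) p.2 α) ⬝ᵥ
            (fun p : Fin N × Fin (n+1) => proj (x p.1) p.2 α)) :=
      fun α => LoheAux.rayleigh hB hβub _
    calc (∑ i, ∑ j ∈ G.neighborFinset i, F i j)
        = (∑ α : Fin (n+1), (fun p : Fin N × Fin (n+1) => proj (x p.1) p.2 α) ⬝ᵥ
            (Bmat G k x *ᵥ fun p : Fin N × Fin (n+1) => proj (x p.1) p.2 α)) :=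
          (LoheAux.quad_sum G k x hunit).symm
      _ ≤ ∑ α : Fin (n+1), β * ((fun p : Fin N × Fin (n+1) => proj (x p.1) p.2 α) ⬝ᵥ
            (fun p : Fin N × Fin (n+1) => proj (x p.1) p.2 α)) :=
          Finset.sum_le_sum (fun α _ => h1 α)
      _ = β * (∑ α : Fin (n+1), (fun p : Fin N × Fin (n+1) => proj (x p.1) p.2 α) ⬝ᵥ
            (fun p : Fin N × Fin (n+1) => proj (x p.1) p.2 α)) := by
          rw [Finset.mul_sum]
      _ = β * ((N:ℝ) * n) := by rw [LoheAux.denom_sum x hunit]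
  -- geometric lower bound
  have hlow : ((N:ℝ) * n) * (K / ((n:ℝ) + 1) * ((n:ℝ) - 1 - q) * (1 - q))
      ≤ ∑ i, ∑ j ∈ G.neighborFinset i, F i j := by
    by_cases hcase : ∃ i j, G.Adj i j ∧ x j ⬝ᵥ x i ≤ 0
    · -- some edge spans an angle ≥ π/2
      obtain ⟨i, j, hadj, hdot⟩ := hcase
      have hne := G.ne_of_adj hadj
      have hpath : (SimpleGraph.Walk.cons hadj (SimpleGraph.Walk.nil)).IsPath := by
        rw [SimpleGraph.Walk.cons_isPath_iff]
        refine ⟨SimpleGraph.Walk.IsPath.nil, ?_⟩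
        simp [SimpleGraph.Walk.support_nil]
        exact hne
      have hps := LoheAux.path_pairs_sum F hFnonneg
        (SimpleGraph.Walk.cons hadj (SimpleGraph.Walk.nil)) hpath
      have hlen1 : (SimpleGraph.Walk.cons hadj (SimpleGraph.Walk.nil : G.Walk j j)).length = 1 := by
        simp
      rw [hlen1, Finset.sum_range_one] at hps
      have hgv0 : (SimpleGraph.Walk.cons hadj (SimpleGraph.Walk.nil : G.Walk j j)).getVert 0 = i := rfl
      have hgv1 : (SimpleGraph.Walk.cons hadj (SimpleGraph.Walk.nil : G.Walk j j)).getVert 1 = j := rfl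
      rw [hgv0, hgv1] at hps
      -- F i j + F j i ≥ 2 K (n-1)
      have hb := abs_le.mp (habs j i)
      have hb' := abs_le.mp (habs i j)
      have hdots : x i ⬝ᵥ x j = x j ⬝ᵥ x i := dotProduct_comm _ _
      have hg : ((n:ℝ) - 1) ≤ (1 - x j ⬝ᵥ x i) * ((n:ℝ) - 1 - x j ⬝ᵥ x i) := by
        nlinarith [hb.1, hb.2]
      have hg0 : (0:ℝ) ≤ (1 - x j ⬝ᵥ x i) * ((n:ℝ) - 1 - x j ⬝ᵥ x i) := by
        nlinarith [hb.1, hb.2]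
      have hF1 : K * ((n:ℝ) - 1) ≤ F i j := by
        have hk := hKle i j hadj
        have h1 : K * ((n:ℝ)-1) ≤ K * ((1 - x j ⬝ᵥ x i) * ((n:ℝ) - 1 - x j ⬝ᵥ x i)) :=
          mul_le_mul_of_nonneg_left hg hKpos.le
        have h2 : K * ((1 - x j ⬝ᵥ x i) * ((n:ℝ) - 1 - x j ⬝ᵥ x i))
            ≤ k i j * ((1 - x j ⬝ᵥ x i) * ((n:ℝ) - 1 - x j ⬝ᵥ x i)) :=
          mul_le_mul_of_nonneg_right hk hg0
        exact le_trans h1 h2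
      have hF2 : K * ((n:ℝ) - 1) ≤ F j i := by
        have hk := hKle j i hadj.symm
        rw [hFdef]
        simp only [hdots]
        have h1 : K * ((n:ℝ)-1) ≤ K * ((1 - x j ⬝ᵥ x i) * ((n:ℝ) - 1 - x j ⬝ᵥ x i)) :=
          mul_le_mul_of_nonneg_left hg hKpos.le
        have h2 : K * ((1 - x j ⬝ᵥ x i) * ((n:ℝ) - 1 - x j ⬝ᵥ x i))
            ≤ k j i * ((1 - x j ⬝ᵥ x i) * ((n:ℝ) - 1 - x j ⬝ᵥ x i)) :=
          mul_le_mul_of_nonneg_right hk hg0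
        exact le_trans h1 h2
      have hNcos : (N:ℝ) * (1 - q) ≤ 2 := LoheAux.N_one_sub_cos hN
      have hn2 : (n:ℝ) * ((n:ℝ) - 1 - q) ≤ ((n:ℝ)+1) * ((n:ℝ)-1) := by nlinarith
      have hBnn : 0 ≤ (n:ℝ) * ((n:ℝ) - 1 - q) := by nlinarith
      calc ((N:ℝ) * n) * (K / ((n:ℝ) + 1) * ((n:ℝ) - 1 - q) * (1 - q))
          = (K / ((n:ℝ)+1)) * (((N:ℝ)*(1 - q)) * ((n:ℝ)*((n:ℝ)-1-q))) := by ring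
        _ ≤ (K / ((n:ℝ)+1)) * (2 * (((n:ℝ)+1) * ((n:ℝ)-1))) := by
            apply mul_le_mul_of_nonneg_left ?_ (by positivity)
            apply mul_le_mul hNcos hn2 hBnn (by norm_num)
        _ = K * ((n:ℝ)-1) + K * ((n:ℝ)-1) := by
            field_simp
            ring
        _ ≤ F i j + F j i := by linarith
        _ ≤ _ := hps
    · -- all edges have positive inner products
      push_neg at hcase
      have hconnOn : LoheAux.ConnOn G Finset.univ := by
        intro u _ v _
        obtain ⟨w⟩ := hconn.preconnected u v
        exact ⟨w, fun z _ => Finset.mem_univ z⟩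
      have huniv : (Finset.univ : Finset (Fin N)).Nonempty :=
        ⟨⟨0, by omega⟩, Finset.mem_univ _⟩
      obtain ⟨r, _, Hc⟩ := LoheAux.center_exists G Finset.univ huniv hconnOn
      have hdisp' : ∀ y : Fin (n+1) → ℝ, y ≠ 0 → ∃ i, x i ⬝ᵥ y ≤ 0 := by
        intro y hy
        by_contra hcon
        push_neg at hcon
        exact hdisp ⟨y, hy, fun i => hcon i⟩
      have hxr0 : x r ≠ 0 := by
        intro h0
        have h1 := hunit r
        rw [h0] at h1
        simp at h1
      obtain ⟨l, hl⟩ := hdisp' (x r) hxr0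
      obtain ⟨w0, _, hw0len⟩ := Hc l (Finset.mem_univ l)
      set P := w0.bypass with hPdef
      have hP : P.IsPath := w0.bypass_isPath
      have hPlen : 2 * P.length ≤ N := by
        have h1 : P.length ≤ w0.length := SimpleGraph.Walk.length_bypass_le w0
        have h2 : (Finset.univ : Finset (Fin N)).card = N := by simp
        omega
      set m := P.length with hmdef
      set c : ℕ → ℝ := fun t => x (P.getVert t) ⬝ᵥ x (P.getVert (t+1)) with hcdef
      set θ : ℕ → ℝ := fun t => Real.arccos (c t) with hθdef
      have hadj' : ∀ t, t < m → G.Adj (P.getVert t) (P.getVert (t+1)) :=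
        fun t ht => P.adj_getVert_succ ht
      have hcpos : ∀ t, t < m → 0 < c t := by
        intro t ht
        exact hcase (P.getVert (t+1)) (P.getVert t) (hadj' t ht).symm
      have hcb : ∀ t, |c t| ≤ 1 := fun t => habs _ _
      have hθ0 : ∀ t, 0 ≤ θ t := fun t => Real.arccos_nonneg _
      have hθle : ∀ t, t < m → θ t ≤ π/2 := fun t ht =>
        Real.arccos_le_pi_div_two.mpr (hcpos t ht).le
      have hcosθ : ∀ t, Real.cos (θ t) = c t := fun t =>
        Real.cos_arccos (abs_le.mp (hcb t)).1 (abs_le.mp (hcb t)).2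
      have hsumθ : π/2 ≤ ∑ t ∈ Finset.range m, θ t := by
        have h1 : Real.arccos (x r ⬝ᵥ x l) ≤ ∑ t ∈ Finset.range m, θ t :=
          LoheAux.path_angle_sum x hunit P
        have h2 : x r ⬝ᵥ x l ≤ 0 := by
          rw [dotProduct_comm]; exact hl
        have h3 : π/2 ≤ Real.arccos (x r ⬝ᵥ x l) := by
          rw [← Real.arccos_zero]
          exact LoheAux.arccos_anti h2
        linarith
      have hmN : (m:ℝ) ≤ (N:ℝ)/2 := by
        have : ((2*m : ℕ):ℝ) ≤ (N:ℝ) := by exact_mod_cast hPlen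
        push_cast at this
        linarith
      -- first tangent sum
      have hstep1 : ∀ t ∈ Finset.range m,
          (1 - q) + Real.sin (π/N) * (θ t - π/N) ≤ 1 - c t := by
        intro t ht
        rw [Finset.mem_range] at ht
        have htan := LoheAux.tangent_cos haN0.le haNle (hθ0 t) (hθle t ht)
        rw [hcosθ] at htan
        linarith
      have hA : (N:ℝ)/2 * (1 - q) ≤ ∑ t ∈ Finset.range m, (1 - c t) := by
        have h1 := Finset.sum_le_sum hstep1
        have h2 : (∑ t ∈ Finset.range m, ((1 - q) + Real.sin (π/N) * (θ t - π/N)))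
            = (m:ℝ) * ((1 - q) - Real.sin (π/N) * (π/N))
              + Real.sin (π/N) * ∑ t ∈ Finset.range m, θ t := by
          rw [Finset.sum_add_distrib, Finset.sum_const, Finset.card_range]
          simp only [mul_sub]
          rw [Finset.sum_sub_distrib, ← Finset.mul_sum, Finset.sum_const, Finset.card_range]
          push_cast
          ring
        rw [h2] at h1
        have hcoef : (1 - q) - Real.sin (π/N) * (π/N) ≤ 0 := by nlinarith [hc0]
        have h3 : (N:ℝ)/2 * ((1 - q) - Real.sin (π/N)*(π/N))
            ≤ (m:ℝ) * ((1 - q) - Real.sin (π/N)*(π/N)) :=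
          mul_le_mul_of_nonpos_right hmN hcoef
        have h4 : Real.sin (π/N) * (π/2) ≤ Real.sin (π/N) * ∑ t ∈ Finset.range m, θ t :=
          mul_le_mul_of_nonneg_left hsumθ hs1
        have h5 : (N:ℝ)/2 * (Real.sin (π/N) * (π/N)) = Real.sin (π/N) * (π/2) := by
          field_simp
        nlinarith [h1, h3, h4, h5]
      -- second tangent sum
      have hstep2 : ∀ t ∈ Finset.range m,
          (1 - q)^2 + (2*(1-q)*Real.sin (π/N)) * (θ t - π/N) ≤ (1 - c t)^2 := by
        intro t ht
        have e1 := hstep1 t ht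
        have e2 : 2*(1-q) * ((1-q) + Real.sin (π/N)*(θ t - π/N)) ≤ 2*(1-q)*(1 - c t) :=
          mul_le_mul_of_nonneg_left e1 (by linarith)
        nlinarith [sq_nonneg ((1 - c t) - (1 - q))]
      have hA2 : (N:ℝ)/2 * (1 - q)^2 ≤ ∑ t ∈ Finset.range m, (1 - c t)^2 := by
        have h1 := Finset.sum_le_sum hstep2
        have h2 : (∑ t ∈ Finset.range m, ((1 - q)^2 + (2*(1-q)*Real.sin (π/N)) * (θ t - π/N)))
            = (m:ℝ) * ((1 - q)^2 - 2*(1-q)*Real.sin (π/N) * (π/N))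
              + 2*(1-q)*Real.sin (π/N) * ∑ t ∈ Finset.range m, θ t := by
          rw [Finset.sum_add_distrib, Finset.sum_const, Finset.card_range]
          simp only [mul_sub]
          rw [Finset.sum_sub_distrib, ← Finset.mul_sum, Finset.sum_const, Finset.card_range]
          push_cast
          ring
        rw [h2] at h1
        have hcoef : (1 - q)^2 - 2*(1-q)*Real.sin (π/N) * (π/N) ≤ 0 := by
          nlinarith [hc0, hq1]
        have h3 : (N:ℝ)/2 * ((1 - q)^2 - 2*(1-q)*Real.sin (π/N)*(π/N))
            ≤ (m:ℝ) * ((1 - q)^2 - 2*(1-q)*Real.sin (π/N)*(π/N)) :=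
          mul_le_mul_of_nonpos_right hmN hcoef
        have h4 : 2*(1-q)*Real.sin (π/N) * (π/2)
            ≤ 2*(1-q)*Real.sin (π/N) * ∑ t ∈ Finset.range m, θ t :=
          mul_le_mul_of_nonneg_left hsumθ (mul_nonneg (by linarith) hs1)
        have h5 : (N:ℝ)/2 * (2*(1-q)*Real.sin (π/N) * (π/N))
            = 2*(1-q)*Real.sin (π/N) * (π/2) := by
          field_simp
        nlinarith [h1, h3, h4, h5]
      -- total per-edge products
      have hT : (N:ℝ)/2 * ((1-q) * ((n:ℝ)-1-q))
          ≤ ∑ t ∈ Finset.range m, (1 - c t) * ((n:ℝ)-1-c t) := by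
        have hid : ∀ t ∈ Finset.range m, (1 - c t) * ((n:ℝ)-1-c t)
            = ((n:ℝ)-2)*(1 - c t) + (1 - c t)^2 := fun t _ => by ring
        rw [Finset.sum_congr rfl hid, Finset.sum_add_distrib, ← Finset.mul_sum]
        have h1 : ((n:ℝ)-2) * ((N:ℝ)/2*(1-q)) ≤ ((n:ℝ)-2) * ∑ t ∈ Finset.range m, (1 - c t) :=
          mul_le_mul_of_nonneg_left hA (by linarith)
        have hring : (N:ℝ)/2*((1-q)*((n:ℝ)-1-q))
            = ((n:ℝ)-2)*((N:ℝ)/2*(1-q)) + (N:ℝ)/2*(1-q)^2 := by ring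
        linarith [hA2]
      -- relate to F along the path
      have hFK : ∀ t ∈ Finset.range m,
          2*K*((1 - c t) * ((n:ℝ)-1-c t))
          ≤ F (P.getVert t) (P.getVert (t+1)) + F (P.getVert (t+1)) (P.getVert t) := by
        intro t ht
        rw [Finset.mem_range] at ht
        have hadjt := hadj' t ht
        have hcomm : x (P.getVert (t+1)) ⬝ᵥ x (P.getVert t) = c t := dotProduct_comm _ _
        have hg0 : 0 ≤ (1 - c t)*((n:ℝ)-1-c t) := by
          have hb := abs_le.mp (hcb t)
          nlinarith [hb.1, hb.2]
        have hk1 := hKle _ _ hadjt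
        have hk2 := hKle _ _ hadjt.symm
        have e1 : K * ((1 - c t)*((n:ℝ)-1-c t))
            ≤ k (P.getVert t) (P.getVert (t+1)) * ((1 - c t)*((n:ℝ)-1-c t)) :=
          mul_le_mul_of_nonneg_right hk1 hg0
        have e2 : K * ((1 - c t)*((n:ℝ)-1-c t))
            ≤ k (P.getVert (t+1)) (P.getVert t) * ((1 - c t)*((n:ℝ)-1-c t)) :=
          mul_le_mul_of_nonneg_right hk2 hg0
        have hFa : F (P.getVert t) (P.getVert (t+1))
            = k (P.getVert t) (P.getVert (t+1)) * ((1 - c t)*((n:ℝ)-1-c t)) := by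
          rw [hFdef]
          simp only [hcomm]
        have hFb : F (P.getVert (t+1)) (P.getVert t)
            = k (P.getVert (t+1)) (P.getVert t) * ((1 - c t)*((n:ℝ)-1-c t)) := by
          rw [hFdef]
        rw [hFa, hFb]
        linarith
      have hps := LoheAux.path_pairs_sum F hFnonneg P hP
      have h1 := Finset.sum_le_sum hFK
      rw [← Finset.mul_sum] at h1
      have h2 : 2*K*((N:ℝ)/2*((1-q)*((n:ℝ)-1-q)))
          ≤ 2*K*(∑ t ∈ Finset.range m, (1 - c t) * ((n:ℝ)-1-c t)) :=
        mul_le_mul_of_nonneg_left hT (by positivity)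
      have hchain : (N:ℝ)*K*((1-q)*((n:ℝ)-1-q)) ≤ ∑ i, ∑ j ∈ G.neighborFinset i, F i j := by
        calc (N:ℝ)*K*((1-q)*((n:ℝ)-1-q)) = 2*K*((N:ℝ)/2*((1-q)*((n:ℝ)-1-q))) := by ring
          _ ≤ 2*K*(∑ t ∈ Finset.range m, (1 - c t) * ((n:ℝ)-1-c t)) := h2
          _ ≤ ∑ t ∈ Finset.range m,
              (F (P.getVert t) (P.getVert (t+1)) + F (P.getVert (t+1)) (P.getVert t)) := h1
          _ ≤ _ := hps
      have hfact : 0 ≤ (N:ℝ)*K*((1-q)*((n:ℝ)-1-q)) := by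
        apply mul_nonneg (mul_nonneg hNpos.le hKpos.le)
        apply mul_nonneg (by linarith) (by nlinarith)
      have hfrac : (n:ℝ)/((n:ℝ)+1) ≤ 1 := by
        rw [div_le_one (by linarith)]
        linarith
      calc ((N:ℝ) * n) * (K / ((n:ℝ) + 1) * ((n:ℝ) - 1 - q) * (1 - q))
          = ((N:ℝ)*K*((1-q)*((n:ℝ)-1-q))) * ((n:ℝ)/((n:ℝ)+1)) := by
            field_simp
        _ ≤ ((N:ℝ)*K*((1-q)*((n:ℝ)-1-q))) * 1 :=
            mul_le_mul_of_nonneg_left hfrac hfact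
        _ = (N:ℝ)*K*((1-q)*((n:ℝ)-1-q)) := by ring
        _ ≤ _ := hchain
  have hfinal : K / ((n:ℝ) + 1) * ((n:ℝ) - 1 - q) * (1 - q) ≤ β := by
    have hNn : (0:ℝ) < (N:ℝ) * n := by positivity
    have := le_trans hlow hmain
    nlinarith
  have hpos' : 0 < K / ((n:ℝ) + 1) * ((n:ℝ) - 1 - q) * (1 - q) := by
    have h1 : 0 < K / ((n:ℝ)+1) := by positivity
    have h2 : 0 < (n:ℝ) - 1 - q := by nlinarith
    have h3 : 0 < 1 - q := by linarith
    positivity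
  exact ⟨hfinal, lt_of_lt_of_le hpos' hfinal⟩
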